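/- For any lattice Λ in ℝ^n and any i-dimensional lattice subspace L of Λ, the determinant of the sublattice Λ ∩ L equals the determinant of the dual lattice intersected with the orthogonal complement L^⊥ times the determinant of Λ, i.e., det(Λ ∩ L) = det(Λ* ∩ L^⊥) · det(Λ). -/

import Mathlib

open scoped RealInnerProductSpace Pointwise
open MeasureTheory Filter

noncomputable section

abbrev Euc (n : ℕ) := EuclideanSpace ℝ (Fin n)

/-- The set of all integer combinations of the family of vectors `v`. -/
def intSpan {n : ℕ} {ι : Type} [Fintype ι] (v : ι → Euc n) : Set (Euc n) :=
  {x | ∃ z : ι → ℤ, x = ∑ j, (z j : ℝ) • v j}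

/-- `Λ` is a (full-rank) lattice in `ℝⁿ`: the integer span of a basis of `ℝⁿ`. -/
def IsLattice {n : ℕ} (Λ : Set (Euc n)) : Prop :=
  ∃ b : Module.Basis (Fin n) ℝ (Euc n), Λ = intSpan ⇑b

/-- Gram determinant of a family of vectors. -/
def gramDet {n : ℕ} {ι : Type} [Fintype ι] [DecidableEq ι] (v : ι → Euc n) : ℝ :=
  Matrix.det (Matrix.of fun j k : ι => ⟪v j, v k⟫)

/-- The determinant (covolume) of the lattice with ℤ-basis `v`:
the square root of the Gram determinant. -/
def latDet {n : ℕ} {ι : Type} [Fintype ι] [DecidableEq ι] (v : ι → Euc n) : ℝ :=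
  Real.sqrt (gramDet v)

/-- `v` is a ℤ-basis of the set `S`: a linearly independent family whose
integer span is `S`. -/
def IsZBasis {n : ℕ} {ι : Type} [Fintype ι] (v : ι → Euc n) (S : Set (Euc n)) : Prop :=
  LinearIndependent ℝ v ∧ S = intSpan v

/-- The determinant (covolume) of a rank-`i` lattice `S` (independent of the
chosen ℤ-basis). -/
def detOf {n : ℕ} (i : ℕ) (S : Set (Euc n)) : ℝ :=
  sInf {d | ∃ v : Fin i → Euc n, IsZBasis v S ∧ d = latDet v}

/-- The dual (polar) lattice of `Λ`. -/
def dualLattice {n : ℕ} (Λ : Set (Euc n)) : Set (Euc n) :=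
  {y | ∀ x ∈ Λ, ∃ m : ℤ, ⟪x, y⟫ = (m : ℝ)}

/-- `L` is an `i`-dimensional lattice plane of `Λ`: `L` has dimension `i` and
`Λ ∩ L` spans `L`. -/
def IsLatticePlane {n : ℕ} (Λ : Set (Euc n)) (i : ℕ) (L : Submodule ℝ (Euc n)) : Prop :=
  Module.finrank ℝ L = i ∧ Submodule.span ℝ (Λ ∩ (L : Set (Euc n))) = L

/-- Orthogonal projection of a set onto the subspace `L`. -/
def projTo {n : ℕ} (L : Submodule ℝ (Euc n)) (S : Set (Euc n)) : Set (Euc n) :=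
  (fun x => ((Submodule.orthogonalProjectionOnto L x : L) : Euc n)) '' S

/-- Rankin's invariant (in the normalization `τ(n,i)` of Henk's paper). -/
def rankin (n i : ℕ) : ℝ :=
  sSup {r | ∃ Λ : Set (Euc n), IsLattice Λ ∧
    r = sInf {s | ∃ L : Submodule ℝ (Euc n), IsLatticePlane Λ i L ∧
      s = detOf i (Λ ∩ (L : Set (Euc n))) ^ ((1:ℝ)/i) / detOf n Λ ^ ((1:ℝ)/n)}}

/-- `S` is a packing set of `K`: distinct translates of `K` by elements of `S`
have disjoint interiors. -/
def IsPackingSet {n : ℕ} (K : Set (Euc n)) (S : Set (Euc n)) : Prop :=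
  ∀ b₁ ∈ S, ∀ b₂ ∈ S, b₁ ≠ b₂ → interior (b₁ +ᵥ K) ∩ interior (b₂ +ᵥ K) = ∅

/-- The packing radius `λ(K,Λ)`. -/
def packingRadius {n : ℕ} (K Λ : Set (Euc n)) : ℝ :=
  sSup {l : ℝ | 0 < l ∧ IsPackingSet (l • K) Λ}

/-- The covering radius `μ(K,Λ)`. -/
def coveringRadius {n : ℕ} (K Λ : Set (Euc n)) : ℝ :=
  sInf {m : ℝ | 0 < m ∧ Λ + m • K = Set.univ}

/-- `K` is a `0`-symmetric convex body with nonempty interior. -/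
def IsBody {n : ℕ} (K : Set (Euc n)) : Prop :=
  Convex ℝ K ∧ IsCompact K ∧ K = -K ∧ (interior K).Nonempty

/-- The density `δ(K)` of a densest lattice packing of `K`. -/
def packDensity {n : ℕ} (K : Set (Euc n)) : ℝ :=
  sSup {d | ∃ Λ : Set (Euc n), IsLattice Λ ∧ IsPackingSet K Λ ∧
    d = (volume K).toReal / detOf n Λ}

/-- The density `θ(K)` of a thinnest lattice covering of `K`. -/
def covDensity {n : ℕ} (K : Set (Euc n)) : ℝ :=
  sInf {d | ∃ Λ : Set (Euc n), IsLattice Λ ∧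
    d = (volume K).toReal * coveringRadius K Λ ^ n / detOf n Λ}

/-- Zong's simultaneous packing and covering constant `γ(K)`. -/
def gammaSim {n : ℕ} (K : Set (Euc n)) : ℝ :=
  sInf {r | ∃ Λ : Set (Euc n), IsLattice Λ ∧ r = coveringRadius K Λ / packingRadius K Λ}

/-- The `i`-th covering minimum `μᵢ(K,Λ)` of Kannan and Lovász. -/
def covMin {n : ℕ} (i : ℕ) (K Λ : Set (Euc n)) : ℝ :=
  sInf {m : ℝ | 0 < m ∧ ∀ A : AffineSubspace ℝ (Euc n), (A : Set (Euc n)).Nonempty →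
    Module.finrank ℝ A.direction = n - i → ((Λ + m • K) ∩ (A : Set (Euc n))).Nonempty}

/-- The generalized simultaneous constant `γᵢ(K)`. -/
def gammaI {n : ℕ} (i : ℕ) (K : Set (Euc n)) : ℝ :=
  sInf {r | ∃ Λ : Set (Euc n), IsLattice Λ ∧ r = covMin i K Λ / packingRadius K Λ}

/-- The projection functional `ρᵢ(K)`. -/
def rhoI {n : ℕ} (i : ℕ) (K : Set (Euc n)) : ℝ :=
  sSup {r | ∃ A : (Euc n) ≃ₗ[ℝ] (Euc n),
    r = sInf {s | ∃ L : Submodule ℝ (Euc n), Module.finrank ℝ L = i ∧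
      s = (volume (⇑A '' K)).toReal ^ ((1:ℝ)/n) /
        ((MeasureTheory.Measure.hausdorffMeasure (i:ℝ) (projTo L (⇑A '' K))).toReal) ^ ((1:ℝ)/i)}}

/-- Length of a shortest nonzero vector of `Λ`. -/
def lambdaOne {n : ℕ} (Λ : Set (Euc n)) : ℝ :=
  sInf {r | ∃ x ∈ Λ, x ≠ 0 ∧ r = ‖x‖}

/-- The (normalized) Hermite constant `τ(n,1)`. -/
def hermite (n : ℕ) : ℝ :=
  sSup {r | ∃ Λ : Set (Euc n), IsLattice Λ ∧ r = lambdaOne Λ / detOf n Λ ^ ((1:ℝ)/n)}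

/-- Volume of the `d`-dimensional unit ball. -/
def kappa (d : ℕ) : ℝ := Real.pi ^ ((d:ℝ)/2) / Real.Gamma ((d:ℝ)/2 + 1)

/-- Upper density of the arrangement `S + K`. -/
def setDensity {n : ℕ} (K S : Set (Euc n)) : ℝ :=
  Filter.limsup (fun r : ℝ =>
    (volume ((S + K) ∩ Metric.ball (0 : Euc n) r)).toReal /
    (volume (Metric.ball (0 : Euc n) r)).toReal) Filter.atTop

/-- The density `δ_T(K)` of a densest translative packing of `K`. -/
def transPackDensity {n : ℕ} (K : Set (Euc n)) : ℝ :=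
  sSup {d | ∃ S : Set (Euc n), IsPackingSet K S ∧ d = setDensity K S}

namespace Aux
open Matrix
set_option linter.unusedSectionVars false

variable {n : ℕ} {ι κ : Type} [Fintype ι] [Fintype κ]

/-- Gram matrix. -/
def gram (v : ι → Euc n) : Matrix ι ι ℝ := Matrix.of fun j k => ⟪v j, v k⟫

lemma gramDet_eq [DecidableEq ι] (v : ι → Euc n) : gramDet v = (gram v).det := rfl

/-- multiply a family of vectors by a matrix on the right. -/
def mulFam (v : ι → Euc n) (A : Matrix ι κ ℝ) : κ → Euc n :=
  fun k => ∑ j, A j k • v j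

lemma gram_mulFam (v : ι → Euc n) (A : Matrix ι κ ℝ) :
    gram (mulFam v A) = Aᵀ * gram v * A := by
  ext k k'
  simp only [gram, mulFam, Matrix.of_apply, Matrix.mul_apply, Matrix.transpose_apply]
  rw [sum_inner]
  have hL : ∀ j : ι, ⟪A j k • v j, ∑ l, A l k' • v l⟫ =
      ∑ l, A j k * (A l k' * ⟪v j, v l⟫) := by
    intro j
    rw [real_inner_smul_left, inner_sum, Finset.mul_sum]
    exact Finset.sum_congr rfl fun l _ => by rw [real_inner_smul_right]
  rw [Finset.sum_congr rfl fun j _ => hL j, Finset.sum_comm]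
  exact Finset.sum_congr rfl fun l _ => by
    rw [Finset.sum_mul]
    exact Finset.sum_congr rfl fun j _ => by ring

lemma mulFam_one [DecidableEq ι] (v : ι → Euc n) : mulFam v (1 : Matrix ι ι ℝ) = v := by
  ext1 k
  simp [mulFam, Matrix.one_apply]

lemma mulFam_mulFam (v : ι → Euc n) (A : Matrix ι κ ℝ) {σ : Type} [Fintype σ]
    (B : Matrix κ σ ℝ) : mulFam (mulFam v A) B = mulFam v (A * B) := by
  ext1 s
  simp only [mulFam, Matrix.mul_apply, Finset.smul_sum, Finset.sum_smul, smul_smul]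
  rw [Finset.sum_comm]
  exact Finset.sum_congr rfl fun j _ => Finset.sum_congr rfl fun k _ => by rw [mul_comm]

lemma mem_intSpan_self (v : ι → Euc n) [DecidableEq ι] (k : ι) : v k ∈ intSpan v := by
  refine ⟨fun j => if j = k then 1 else 0, ?_⟩
  simp [Finset.sum_ite_eq', apply_ite]

lemma mulFam_int_mem (v : ι → Euc n) (Z : Matrix ι κ ℤ) (k : κ) :
    mulFam v (Z.map ((↑) : ℤ → ℝ)) k ∈ intSpan v :=
  ⟨fun j => Z j k, by simp [mulFam]⟩

lemma exists_int_matrix {v : ι → Euc n} {u : κ → Euc n} (h : ∀ k, u k ∈ intSpan v) :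
    ∃ Z : Matrix ι κ ℤ, u = mulFam v (Z.map ((↑) : ℤ → ℝ)) := by
  choose z hz using h
  exact ⟨Matrix.of fun j k => z k j, by ext1 k; simpa [mulFam] using hz k⟩

lemma mulFam_cancel {v : ι → Euc n} (hv : LinearIndependent ℝ v)
    {A B : Matrix ι κ ℝ} (h : mulFam v A = mulFam v B) : A = B := by
  ext j k
  have h1 : ∑ l, (A l k - B l k) • v l = 0 := by
    have := congrFun h k
    simp only [mulFam] at this
    simp [sub_smul, Finset.sum_sub_distrib, this]
  have := Fintype.linearIndependent_iff.mp hv _ h1 j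
  linarith [sub_eq_zero.mp (by linarith [this] : A j k - B j k = 0)]


lemma dotProduct_gram (v : ι → Euc n) (x y : ι → ℝ) :
    x ⬝ᵥ (gram v *ᵥ y) = ⟪∑ j, x j • v j, ∑ k, y k • v k⟫ := by
  conv_rhs => rw [sum_inner]
  simp only [dotProduct, Matrix.mulVec, dotProduct, gram, Matrix.of_apply]
  refine Finset.sum_congr rfl fun j _ => ?_
  rw [real_inner_smul_left, inner_sum, Finset.mul_sum, Finset.mul_sum]
  refine Finset.sum_congr rfl fun k _ => ?_
  rw [real_inner_smul_right]; ring

lemma gram_posDef [DecidableEq ι] {v : ι → Euc n} (hv : LinearIndependent ℝ v) :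
    (gram v).PosDef := by
  refine Matrix.PosDef.of_dotProduct_mulVec_pos ?_ ?_
  · ext j k
    simp only [Matrix.conjTranspose_apply, gram, Matrix.of_apply, star_trivial]
    exact real_inner_comm _ _
  · intro x hx
    have hs : star x = x := by simp
    rw [hs, dotProduct_gram]
    have hne : (∑ j, x j • v j) ≠ 0 := by
      intro h0
      exact hx (funext fun j => Fintype.linearIndependent_iff.mp hv x h0 j)
    exact lt_of_le_of_ne real_inner_self_nonneg (Ne.symm (inner_self_ne_zero.mpr hne))

lemma gramDet_pos [DecidableEq ι] {v : ι → Euc n} (hv : LinearIndependent ℝ v) :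
    0 < gramDet v := (gram_posDef hv).det_pos

lemma linIndep_of_gramDet_ne_zero [DecidableEq ι] {u : ι → Euc n}
    (h : gramDet u ≠ 0) : LinearIndependent ℝ u := by
  rw [gramDet_eq] at h
  rw [Fintype.linearIndependent_iff]
  intro g hg
  have hmv : gram u *ᵥ g = 0 := by
    ext j
    have : (gram u *ᵥ g) j = ⟪u j, ∑ k, g k • u k⟫ := by
      simp only [Matrix.mulVec, dotProduct, gram, Matrix.of_apply, inner_sum]
      exact Finset.sum_congr rfl fun k _ => by rw [real_inner_smul_right]; ring
    rw [this, hg, inner_zero_right]; rfl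
  have : g = 0 := by
    have h2 := congrArg (fun y => (gram u)⁻¹ *ᵥ y) hmv
    simp only [Matrix.mulVec_mulVec, Matrix.mulVec_zero] at h2
    rwa [Matrix.nonsing_inv_mul _ (Ne.isUnit h), Matrix.one_mulVec] at h2
  exact fun j => congrFun this j

/-- the key change-of-basis invariance -/
lemma gramDet_eq_of_intSpan_eq [DecidableEq ι] {v u : ι → Euc n}
    (hv : LinearIndependent ℝ v) (h : intSpan v = intSpan u) : gramDet u = gramDet v := by
  have h1 : ∀ k, u k ∈ intSpan v := fun k => h ▸ mem_intSpan_self u k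
  have h2 : ∀ k, v k ∈ intSpan u := fun k => h.symm ▸ mem_intSpan_self v k
  obtain ⟨Z, hZ⟩ := exists_int_matrix h1
  obtain ⟨Z', hZ'⟩ := exists_int_matrix h2
  have hvv : mulFam v ((Z.map ((↑) : ℤ → ℝ)) * (Z'.map ((↑) : ℤ → ℝ))) = mulFam v 1 := by
    rw [← mulFam_mulFam, ← hZ, ← hZ', mulFam_one]
  have hZZ' : (Z.map ((↑) : ℤ → ℝ)) * (Z'.map ((↑) : ℤ → ℝ)) = 1 := mulFam_cancel hv hvv
  have hmapdet : ∀ W : Matrix ι ι ℤ, (W.map ((↑) : ℤ → ℝ)).det = ((W.det : ℝ)) := by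
    intro W
    exact ((Int.castRingHom ℝ).map_det W).symm
  have hdet : ((Z.det : ℝ)) * ((Z'.det : ℝ)) = 1 := by
    have := congrArg Matrix.det hZZ'
    rwa [Matrix.det_mul, Matrix.det_one, hmapdet, hmapdet] at this
  have hdet' : Z.det * Z'.det = 1 := by exact_mod_cast hdet
  have hsq : ((Z.det : ℝ)) ^ 2 = 1 := by
    rcases Int.isUnit_iff.mp (IsUnit.of_mul_eq_one _ hdet') with h' | h' <;>
      rw [h'] <;> norm_num
  rw [gramDet_eq, gramDet_eq, hZ, gram_mulFam, Matrix.det_mul, Matrix.det_mul,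
    Matrix.det_transpose, hmapdet]
  have hr : ((Z.det : ℝ)) * (gram v).det * ((Z.det : ℝ)) = ((Z.det : ℝ))^2 * (gram v).det := by
    ring
  rw [hr, hsq, one_mul]

lemma latDet_eq_of_intSpan_eq [DecidableEq ι] {v u : ι → Euc n}
    (hv : LinearIndependent ℝ v) (h : intSpan v = intSpan u) : latDet u = latDet v := by
  unfold latDet; rw [gramDet_eq_of_intSpan_eq hv h]

lemma linIndep_of_intSpan_eq [DecidableEq ι] {v u : ι → Euc n}
    (hv : LinearIndependent ℝ v) (h : intSpan v = intSpan u) : LinearIndependent ℝ u :=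
  linIndep_of_gramDet_ne_zero (by rw [gramDet_eq_of_intSpan_eq hv h]; exact (gramDet_pos hv).ne')

lemma gramDet_comp_equiv [DecidableEq ι] [DecidableEq κ] (v : ι → Euc n) (σ : κ ≃ ι) :
    gramDet (v ∘ σ) = gramDet v := by
  rw [gramDet_eq, gramDet_eq]
  have : gram (v ∘ σ) = (gram v).submatrix σ σ := rfl
  rw [this, Matrix.det_submatrix_equiv_self]

lemma latDet_comp_equiv [DecidableEq ι] [DecidableEq κ] (v : ι → Euc n) (σ : κ ≃ ι) :
    latDet (v ∘ σ) = latDet v := by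
  unfold latDet; rw [gramDet_comp_equiv]

lemma intSpan_comp_equiv (v : ι → Euc n) (σ : κ ≃ ι) : intSpan (v ∘ σ) = intSpan v := by
  ext x
  constructor
  · rintro ⟨z, rfl⟩
    refine ⟨z ∘ σ.symm, ?_⟩
    rw [← Equiv.sum_comp σ (fun j => (((z ∘ σ.symm) j : ℝ)) • v j)]
    simp
  · rintro ⟨z, rfl⟩
    refine ⟨z ∘ σ, ?_⟩
    rw [← Equiv.sum_comp σ (fun j => ((z j : ℝ)) • v j)]
    simp

lemma detOf_eq {k : ℕ} {S : Set (Euc n)} {v₀ : Fin k → Euc n} (h : IsZBasis v₀ S) :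
    detOf k S = latDet v₀ := by
  have hset : {d | ∃ v : Fin k → Euc n, IsZBasis v S ∧ d = latDet v} = {latDet v₀} := by
    ext d
    simp only [Set.mem_setOf_eq, Set.mem_singleton_iff]
    constructor
    · rintro ⟨v', ⟨hli, hsp⟩, rfl⟩
      exact (latDet_eq_of_intSpan_eq hli (hsp.symm.trans h.2)).symm
    · rintro rfl; exact ⟨v₀, h, rfl⟩
  rw [detOf, hset, csInf_singleton]


section Adapted

variable {n : ℕ}

/-- The ℤ-linear map sending integer coordinates to the corresponding lattice point. -/
def phi (b : Module.Basis (Fin n) ℝ (Euc n)) : (Fin n → ℤ) →ₗ[ℤ] Euc n where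
  toFun z := ∑ j, (z j : ℝ) • b j
  map_add' z w := by
    simp only [Pi.add_apply, Int.cast_add, add_smul]
    rw [Finset.sum_add_distrib]
  map_smul' c z := by
    simp only [Pi.smul_apply, smul_eq_mul, Int.cast_mul, RingHom.id_apply]
    rw [← Int.cast_smul_eq_zsmul ℝ, Finset.smul_sum]
    exact Finset.sum_congr rfl fun j _ => by rw [smul_smul]

lemma phi_apply (b : Module.Basis (Fin n) ℝ (Euc n)) (z : Fin n → ℤ) :
    phi b z = ∑ j, (z j : ℝ) • b j := rfl

lemma phi_injective (b : Module.Basis (Fin n) ℝ (Euc n)) : Function.Injective (phi b) := by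
  intro z w h
  have h0 : ∑ j, ((z j : ℝ) - (w j : ℝ)) • b j = 0 := by
    simp only [sub_smul, Finset.sum_sub_distrib]
    rw [← phi_apply b z, ← phi_apply b w, h, sub_self]
  funext j
  have := Fintype.linearIndependent_iff.mp b.linearIndependent _ h0 j
  exact_mod_cast sub_eq_zero.mp this

lemma phi_intComb (b : Module.Basis (Fin n) ℝ (Euc n)) {κ : Type} [Fintype κ]
    (t : κ → ℤ) (g : κ → Fin n → ℤ) :
    phi b (∑ k, t k • g k) = ∑ k, ((t k : ℝ)) • phi b (g k) := by
  rw [map_sum]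
  exact Finset.sum_congr rfl fun k _ => by rw [map_zsmul, Int.cast_smul_eq_zsmul]

lemma phi_mem_intSpan (b : Module.Basis (Fin n) ℝ (Euc n)) (z : Fin n → ℤ) :
    phi b z ∈ intSpan ⇑b := ⟨z, rfl⟩

lemma mem_intSpan_phi (b : Module.Basis (Fin n) ℝ (Euc n)) {x : Euc n} (hx : x ∈ intSpan ⇑b) :
    ∃ z : Fin n → ℤ, x = phi b z := hx

/-- main construction: an adapted ℤ-basis of `Λ` indexed by `Fin i ⊕ Fin (n-i)`
whose first block is a ℤ-basis of `Λ ∩ L`. -/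
lemma exists_adapted {i : ℕ} {Λ : Set (Euc n)} (b : Module.Basis (Fin n) ℝ (Euc n))
    (hΛ : Λ = intSpan ⇑b) (L : Submodule ℝ (Euc n))
    (v : Fin i → Euc n) (hv : IsZBasis v (Λ ∩ (L : Set (Euc n)))) :
    ∃ u : Fin i ⊕ Fin (n - i) → Euc n,
      IsZBasis u Λ ∧ IsZBasis (u ∘ Sum.inl) (Λ ∩ (L : Set (Euc n))) := by
  classical
  set N : Submodule ℤ (Fin n → ℤ) := (L.restrictScalars ℤ).comap (phi b) with hN
  obtain ⟨m, snf⟩ := N.smithNormalForm (Pi.basisFun ℤ (Fin n))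
  obtain ⟨bM, bN, f, a, hsnf⟩ := snf
  -- each `bM (f k)` lies in `N`
  have ha : ∀ k, a k ≠ 0 := by
    intro k hk
    exact bN.ne_zero k (Subtype.ext (by rw [hsnf k, hk, zero_smul]; rfl))
  have hbMf : ∀ k, bM (f k) ∈ N := by
    intro k
    have h1 : (bN k : Fin n → ℤ) ∈ N := (bN k).2
    rw [hsnf k] at h1
    have h2 : phi b ((a k) • bM (f k)) ∈ L := h1
    rw [map_zsmul, ← Int.cast_smul_eq_zsmul ℝ] at h2
    have h3 : ((a k : ℝ))⁻¹ • (((a k : ℝ)) • phi b (bM (f k))) ∈ L := L.smul_mem _ h2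
    rw [inv_smul_smul₀ (by exact_mod_cast ha k) _] at h3
    exact h3
  -- `u_head` is the candidate ℤ-basis of `Λ ∩ L`
  set uh : Fin m → Euc n := fun k => phi b (bM (f k)) with huh
  have hspanN : Λ ∩ (L : Set (Euc n)) = intSpan uh := by
    ext x
    constructor
    · rintro ⟨hxΛ, hxL⟩
      obtain ⟨z, rfl⟩ := mem_intSpan_phi b (hΛ ▸ hxΛ)
      have hzN : z ∈ N := hxL
      set d : Fin m → ℤ := fun l => bN.repr ⟨z, hzN⟩ l with hd
      have hrepr : (⟨z, hzN⟩ : N) = ∑ l, d l • bN l := (bN.sum_repr ⟨z, hzN⟩).symm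
      have hz : z = ∑ l, (d l * a l) • bM (f l) := by
        have := congrArg (Subtype.val) hrepr
        simp only [Submodule.coe_sum, Submodule.coe_smul] at this
        rw [this]
        exact Finset.sum_congr rfl fun l _ => by rw [hsnf l, smul_smul]
      refine ⟨fun l => d l * a l, ?_⟩
      rw [hz, phi_intComb]
    · rintro ⟨z, rfl⟩
      have hmem : (∑ k, z k • bM (f k)) ∈ N := Submodule.sum_mem _ fun k _ => N.smul_mem _ (hbMf k)
      have hxphi : ∑ j, ((z j : ℝ)) • uh j = phi b (∑ k, z k • bM (f k)) := by
        rw [phi_intComb]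
      constructor
      · rw [hxphi, hΛ]; exact phi_mem_intSpan _ _
      · rw [hxphi]; exact hmem
  -- linear independence of `uh` over ℤ
  have huhZ : LinearIndependent ℤ uh := by
    have h1 : LinearIndependent ℤ (fun k => bM (f k)) := bM.linearIndependent.comp f f.injective
    exact h1.map' (phi b) (LinearMap.ker_eq_bot.mpr (phi_injective b))
  -- m = i
  have hmi : m = i := by
    have hvu : intSpan v = intSpan uh := hv.2.symm.trans hspanN
    have h1 : ∀ k, uh k ∈ intSpan v := fun k => by
      rw [hvu]; exact mem_intSpan_self uh k
    have h2 : ∀ k, v k ∈ intSpan uh := fun k => by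
      rw [← hvu]; exact mem_intSpan_self v k
    obtain ⟨Z, hZ⟩ := exists_int_matrix h1
    obtain ⟨Z', hZ'⟩ := exists_int_matrix h2
    have hZZ' : (Z.map ((↑) : ℤ → ℝ)) * (Z'.map ((↑) : ℤ → ℝ)) = 1 := by
      apply mulFam_cancel hv.1
      rw [← mulFam_mulFam, ← hZ, ← hZ', mulFam_one]
    have hZ'Z : (Z'.map ((↑) : ℤ → ℝ)) * (Z.map ((↑) : ℤ → ℝ)) = 1 := by
      have huu : mulFam uh ((Z'.map ((↑) : ℤ → ℝ)) * (Z.map ((↑) : ℤ → ℝ))) = mulFam uh 1 := by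
        rw [← mulFam_mulFam, ← hZ', ← hZ, mulFam_one]
      -- use ℤ-linear independence of uh
      ext j k
      have hcol := congrFun huu k
      simp only [mulFam] at hcol
      have hzero : ∑ l, ((((Z'.map ((↑) : ℤ → ℝ)) * (Z.map ((↑) : ℤ → ℝ))) l k
          - (1 : Matrix (Fin m) (Fin m) ℝ) l k)) • uh l = 0 := by
        simp only [sub_smul, Finset.sum_sub_distrib, hcol, sub_self]
      -- entries are integers
      have hint : ∀ l, ((Z' * Z) l k : ℝ) = ((Z'.map ((↑) : ℤ → ℝ)) * (Z.map ((↑) : ℤ → ℝ))) l k := by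
        intro l
        simp [Matrix.mul_apply]
      set g : Fin m → ℤ := fun l => (Z' * Z) l k - (1 : Matrix (Fin m) (Fin m) ℤ) l k with hg
      have hone : ∀ l, (((1 : Matrix (Fin m) (Fin m) ℤ) l k : ℤ) : ℝ)
          = (1 : Matrix (Fin m) (Fin m) ℝ) l k := by
        intro l; by_cases hlk : l = k <;> simp [Matrix.one_apply, hlk]
      have hzero' : ∑ l, g l • uh l = 0 := by
        rw [← hzero]
        refine Finset.sum_congr rfl fun l _ => ?_
        rw [← Int.cast_smul_eq_zsmul ℝ]
        congr 1
        rw [hg]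
        push_cast
        rw [hint l, hone l]
      have := Fintype.linearIndependent_iff.mp huhZ g hzero' j
      have h1 : (Z' * Z) j k = (1 : Matrix (Fin m) (Fin m) ℤ) j k := by
        have := sub_eq_zero.mp this
        exact this
      calc (Z'.map ((↑) : ℤ → ℝ) * Z.map ((↑) : ℤ → ℝ)) j k
          = ((Z' * Z) j k : ℝ) := (hint j).symm
        _ = (((1 : Matrix (Fin m) (Fin m) ℤ) j k : ℤ) : ℝ) := by rw [h1]
        _ = (1 : Matrix (Fin m) (Fin m) ℝ) j k := by
              by_cases hjk : j = k <;> simp [Matrix.one_apply, hjk]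
    -- build a linear equivalence
    have e : (Fin m → ℝ) ≃ₗ[ℝ] (Fin i → ℝ) :=
      LinearEquiv.ofLinear (Matrix.toLin' (Z.map ((↑) : ℤ → ℝ)))
        (Matrix.toLin' (Z'.map ((↑) : ℤ → ℝ)))
        (by rw [← Matrix.toLin'_mul, hZZ', Matrix.toLin'_one])
        (by rw [← Matrix.toLin'_mul, hZ'Z, Matrix.toLin'_one])
    have := e.finrank_eq
    simpa using this
  subst hmi
  -- build the reindexing equivalence
  have ecard : Fintype.card {x : Fin n // x ∉ Set.range f} = n - m := by
    have h1 : Fintype.card {x : Fin n // x ∈ Set.range f} = m := by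
      rw [Fintype.card_congr (Equiv.ofInjective f f.injective).symm, Fintype.card_fin]
    have h2 := Fintype.card_subtype_compl (fun x : Fin n => x ∈ Set.range f)
    rw [h1, Fintype.card_fin] at h2
    exact h2
  have e2 : Fin (n - m) ≃ {x : Fin n // x ∉ Set.range f} :=
    (Fintype.equivFinOfCardEq ecard).symm
  set σ : Fin m ⊕ Fin (n - m) ≃ Fin n :=
    (Equiv.sumCongr (Equiv.ofInjective f f.injective) e2).trans
      (Equiv.Set.sumCompl (Set.range f)) with hσ
  have hσinl : ∀ k, σ (Sum.inl k) = f k := by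
    intro k
    rw [hσ]
    simp only [Equiv.trans_apply, Equiv.sumCongr_apply, Sum.map_inl,
      Equiv.Set.sumCompl_apply_inl]
    rfl
  -- the full basis of Λ
  have hintSpanbM : intSpan (fun j => phi b (bM j)) = intSpan ⇑b := by
    ext x
    constructor
    · rintro ⟨z, rfl⟩
      have : ∑ j, ((z j : ℝ)) • phi b (bM j) = phi b (∑ j, z j • bM j) := by
        rw [phi_intComb]
      rw [this]; exact phi_mem_intSpan _ _
    · rintro ⟨z, rfl⟩
      have hz : (z : Fin n → ℤ) = ∑ l, (bM.repr z l) • bM l := (bM.sum_repr z).symm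
      refine ⟨fun l => bM.repr z l, ?_⟩
      have : phi b z = phi b (∑ l, (bM.repr z l) • bM l) := by rw [← hz]
      rw [← phi_apply, this, phi_intComb]
  set u : Fin m ⊕ Fin (n - m) → Euc n := (fun j => phi b (bM j)) ∘ σ with hu
  have huspan : intSpan u = Λ := by
    rw [hu, intSpan_comp_equiv, hintSpanbM, hΛ]
  have hulin : LinearIndependent ℝ u := by
    have h1 : LinearIndependent ℝ (fun j => phi b (bM j)) :=
      linIndep_of_intSpan_eq b.linearIndependent hintSpanbM.symm
    exact h1.comp σ σ.injective
  have huinl : u ∘ Sum.inl = uh := by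
    funext k
    simp only [hu, Function.comp_apply, hσinl k, huh]
  refine ⟨u, ⟨hulin, huspan.symm⟩, ?_⟩
  rw [huinl]
  exact ⟨linIndep_of_intSpan_eq hv.1 (hv.2.symm.trans hspanN), hspanN⟩

end Adapted


lemma span_intSpan [DecidableEq ι] (x : ι → Euc n) :
    Submodule.span ℝ (intSpan x) = Submodule.span ℝ (Set.range x) := by
  apply le_antisymm
  · rw [Submodule.span_le]
    rintro _ ⟨z, rfl⟩
    exact Submodule.sum_mem _ fun j _ =>
      Submodule.smul_mem _ _ (Submodule.subset_span ⟨j, rfl⟩)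
  · apply Submodule.span_mono
    rintro _ ⟨j, rfl⟩
    exact mem_intSpan_self x j

lemma det_toBlocks_inv {ι κ : Type} [Fintype ι] [Fintype κ] [DecidableEq ι] [DecidableEq κ]
    (G : Matrix (ι ⊕ κ) (ι ⊕ κ) ℝ) (hG : G.det ≠ 0) (hA : (G.toBlocks₁₁).det ≠ 0) :
    (G.toBlocks₁₁).det = ((G⁻¹).toBlocks₂₂).det * G.det := by
  classical
  set A := G.toBlocks₁₁ with hAdef
  set B := G.toBlocks₁₂
  set C := G.toBlocks₂₁
  set D := G.toBlocks₂₂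
  have hGb : G = Matrix.fromBlocks A B C D := (Matrix.fromBlocks_toBlocks G).symm
  letI iA : Invertible A := A.invertibleOfIsUnitDet (Ne.isUnit hA)
  have hdetG : G.det = A.det * (D - C * ⅟A * B).det := by
    rw [hGb, Matrix.det_fromBlocks₁₁]
  have hS : (D - C * ⅟A * B).det ≠ 0 := by
    intro h0
    rw [hdetG, h0, mul_zero] at hG
    exact hG rfl
  letI iS : Invertible (D - C * ⅟A * B) := Matrix.invertibleOfIsUnitDet _ (Ne.isUnit hS)
  letI iG : Invertible (Matrix.fromBlocks A B C D) := Matrix.fromBlocks₁₁Invertible A B C D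
  have hinv : (Matrix.fromBlocks A B C D)⁻¹ = ⅟(Matrix.fromBlocks A B C D) :=
    (Matrix.invOf_eq_nonsing_inv _).symm
  have h22 : ((Matrix.fromBlocks A B C D)⁻¹).toBlocks₂₂ = ⅟(D - C * ⅟A * B) := by
    rw [hinv, Matrix.invOf_fromBlocks₁₁_eq, Matrix.toBlocks_fromBlocks₂₂]
  have hfinal : ((G⁻¹).toBlocks₂₂).det = ((D - C * ⅟A * B).det)⁻¹ := by
    rw [hGb, h22, Matrix.invOf_eq_nonsing_inv, Matrix.det_nonsing_inv, Ring.inverse_eq_inv']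
  rw [hfinal, hdetG, mul_comm, mul_assoc, mul_inv_cancel₀ hS, mul_one]

end Aux

open Aux Matrix

/-- det(Λ ∩ L) = det(Λ* ∩ L^⊥) · det Λ. -/
theorem stmt0 {n i : ℕ} (Λ : Set (Euc n)) (hΛ : IsLattice Λ)
    (L : Submodule ℝ (Euc n)) (hL : IsLatticePlane Λ i L)
    (v : Fin i → Euc n) (hv : IsZBasis v (Λ ∩ (L : Set (Euc n))))
    (w : Fin (n - i) → Euc n) (hw : IsZBasis w (dualLattice Λ ∩ ((Lᗮ : Submodule ℝ (Euc n)) : Set (Euc n)))) :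
    latDet v = latDet w * detOf n Λ := by
  classical
  obtain ⟨b, hb⟩ := hΛ
  obtain ⟨u, hu, huinl⟩ := exists_adapted b hb L v hv
  have hin : i ≤ n := by
    have h1 := Submodule.finrank_le L
    rw [hL.1, finrank_euclideanSpace, Fintype.card_fin] at h1
    exact h1
  have hcard : Fintype.card (Fin i ⊕ Fin (n - i)) = n := by
    simp [Fintype.card_sum]
    omega
  -- the Gram matrix and the dual family
  set G : Matrix (Fin i ⊕ Fin (n - i)) (Fin i ⊕ Fin (n - i)) ℝ := gram u with hGdef
  have hGdet : G.det ≠ 0 := by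
    have := gramDet_pos hu.1
    rw [gramDet_eq] at this
    exact this.ne'
  set d : Fin i ⊕ Fin (n - i) → Euc n := mulFam u G⁻¹ with hddef
  have hgram_d : gram d = G⁻¹ := by
    rw [hddef, gram_mulFam]
    have hsym : Gᵀ = G := by
      rw [hGdef]
      ext j k
      simp only [Aux.gram, Matrix.transpose_apply, Matrix.of_apply]
      exact real_inner_comm _ _
    rw [Matrix.transpose_nonsing_inv, hsym, Matrix.nonsing_inv_mul _ (Ne.isUnit hGdet),
      Matrix.one_mul]
  -- duality pairing
  have hud : ∀ j k, ⟪u j, d k⟫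
      = (1 : Matrix (Fin i ⊕ Fin (n - i)) (Fin i ⊕ Fin (n - i)) ℝ) j k := by
    intro j k
    have hdk : d k = ∑ l, G⁻¹ l k • u l := by rw [hddef]; rfl
    rw [hdk, inner_sum]
    have h1 : ∀ l, ⟪u j, G⁻¹ l k • u l⟫ = G j l * G⁻¹ l k := by
      intro l
      rw [real_inner_smul_right, hGdef]
      simp only [Aux.gram, Matrix.of_apply]
      ring
    rw [Finset.sum_congr rfl fun l _ => h1 l, ← Matrix.mul_apply,
      Matrix.mul_nonsing_inv _ (Ne.isUnit hGdet)]
  have hexp : ∀ (c : Fin i ⊕ Fin (n - i) → ℝ) (k), ⟪∑ j, c j • u j, d k⟫ = c k := by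
    intro c k
    rw [sum_inner]
    have h1 : ∀ j, ⟪c j • u j, d k⟫ = c j * (if j = k then 1 else 0) := by
      intro j
      rw [real_inner_smul_left, hud j k, Matrix.one_apply]
    rw [Finset.sum_congr rfl fun j _ => h1 j]
    simp
  have hexp' : ∀ (c : Fin i ⊕ Fin (n - i) → ℝ) (k), ⟪u k, ∑ l, c l • d l⟫ = c k := by
    intro c k
    rw [inner_sum]
    have h1 : ∀ l, ⟪u k, c l • d l⟫ = c l * (if k = l then 1 else 0) := by
      intro l
      rw [real_inner_smul_right, hud k l, Matrix.one_apply]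
    rw [Finset.sum_congr rfl fun l _ => h1 l]
    simp
  -- d is linearly independent and spans
  have hd_li : LinearIndependent ℝ d := by
    apply linIndep_of_gramDet_ne_zero
    rw [gramDet_eq, hgram_d, Matrix.det_nonsing_inv, Ring.inverse_eq_inv']
    exact inv_ne_zero hGdet
  have hd_span : ∀ y : Euc n, ∃ c : Fin i ⊕ Fin (n - i) → ℝ, y = ∑ l, c l • d l := by
    intro y
    have h1 : Submodule.span ℝ (Set.range d) = ⊤ :=
      hd_li.span_eq_top_of_card_eq_finrank'
        (by rw [hcard, finrank_euclideanSpace, Fintype.card_fin])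
    have h2 : y ∈ Submodule.span ℝ (Set.range d) := by rw [h1]; trivial
    obtain ⟨c, hc⟩ := (Submodule.mem_span_range_iff_exists_fun ℝ).mp h2
    exact ⟨c, hc.symm⟩
  -- membership facts
  have hmemΛ : ∀ k, u k ∈ Λ := by
    intro k
    rw [hu.2]
    exact mem_intSpan_self u k
  have hmemL : ∀ j, u (Sum.inl j) ∈ L := by
    intro j
    have h1 : (u ∘ Sum.inl) j ∈ intSpan (u ∘ Sum.inl) := mem_intSpan_self _ j
    rw [← huinl.2] at h1
    exact h1.2
  have hspanL : L = Submodule.span ℝ (Set.range (u ∘ Sum.inl)) := by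
    conv_lhs => rw [← hL.2]
    rw [huinl.2, span_intSpan]
  -- the tail of `d` is a ℤ-basis of the dual lattice intersected with `Lᗮ`
  have hdt : dualLattice Λ ∩ ((Lᗮ : Submodule ℝ (Euc n)) : Set (Euc n))
      = intSpan (d ∘ Sum.inr) := by
    ext x
    constructor
    · rintro ⟨hxdual, hxperp⟩
      obtain ⟨c, hc⟩ := hd_span x
      have hck : ∀ k, c k = ⟪u k, x⟫ := by
        intro k
        rw [hc, hexp']
      have hinl0 : ∀ j, c (Sum.inl j) = 0 := by
        intro j
        rw [hck]
        exact (Submodule.mem_orthogonal L x).mp hxperp _ (hmemL j)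
      choose mz hmz using fun k => hxdual (u (Sum.inr k)) (hmemΛ (Sum.inr k))
      refine ⟨mz, ?_⟩
      rw [hc, Fintype.sum_sum_type]
      have hz1 : ∑ j, c (Sum.inl j) • d (Sum.inl j) = 0 := by
        simp [hinl0]
      have hz2 : ∀ k, c (Sum.inr k) = ((mz k : ℝ)) := by
        intro k
        rw [hck, hmz k]
      rw [hz1, zero_add]
      exact Finset.sum_congr rfl fun k _ => by
        rw [hz2 k]
        rfl
    · rintro ⟨z, rfl⟩
      constructor
      · intro y hy
        rw [hu.2] at hy
        obtain ⟨t, rfl⟩ := hy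
        refine ⟨∑ k, z k * t (Sum.inr k), ?_⟩
        simp only [Function.comp_apply]
        rw [inner_sum]
        have h1 : ∀ k, ⟪∑ j, ((t j : ℝ)) • u j, ((z k : ℝ)) • d (Sum.inr k)⟫
            = (z k : ℝ) * (t (Sum.inr k) : ℝ) := by
          intro k
          rw [real_inner_smul_right, hexp (fun j => ((t j : ℝ)))]
        rw [Finset.sum_congr rfl fun k _ => h1 k]
        push_cast
        rfl
      · have hperp : (∑ k, ((z k : ℝ)) • d (Sum.inr k)) ∈ Lᗮ := by
          rw [Submodule.mem_orthogonal]
          intro p hp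
          rw [hspanL] at hp
          obtain ⟨cp, hcp⟩ := (Submodule.mem_span_range_iff_exists_fun ℝ).mp hp
          have hps : p = ∑ l, (Sum.elim cp fun _ : Fin (n - i) => (0:ℝ)) l • u l := by
            rw [Fintype.sum_sum_type]
            simp only [Sum.elim_inl, Sum.elim_inr, zero_smul, Finset.sum_const_zero, add_zero]
            exact hcp.symm
          rw [hps, inner_sum]
          have h2 : ∀ k, ⟪∑ l, (Sum.elim cp fun _ : Fin (n - i) => (0:ℝ)) l • u l,
              ((z k : ℝ)) • d (Sum.inr k)⟫ = 0 := by
            intro k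
            rw [real_inner_smul_right,
              hexp (Sum.elim cp fun _ : Fin (n - i) => (0:ℝ)) (Sum.inr k)]
            simp
          rw [Finset.sum_congr rfl fun k _ => h2 k, Finset.sum_const_zero]
        exact hperp
  -- transfer latDet across ℤ-basis changes
  have hvdt : latDet (u ∘ Sum.inl) = latDet v :=
    latDet_eq_of_intSpan_eq hv.1 (hv.2.symm.trans huinl.2)
  have hwdt : latDet (d ∘ Sum.inr) = latDet w :=
    latDet_eq_of_intSpan_eq hw.1 (hw.2.symm.trans hdt)
  have hτ : detOf n Λ = latDet u := by
    have hni : i + (n - i) = n := by omega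
    set τ : (Fin i ⊕ Fin (n - i)) ≃ Fin n := finSumFinEquiv.trans (finCongr hni) with hτdef
    have h1 : IsZBasis (u ∘ τ.symm) Λ := by
      refine ⟨hu.1.comp _ τ.symm.injective, ?_⟩
      rw [intSpan_comp_equiv]
      exact hu.2
    rw [detOf_eq h1, latDet_comp_equiv]
  -- the determinant identity via the Schur complement
  have hA : gram (u ∘ Sum.inl) = G.toBlocks₁₁ := by rw [hGdef]; rfl
  have hD : gram (d ∘ Sum.inr) = (G⁻¹).toBlocks₂₂ := by rw [← hgram_d]; rfl
  have hAdet : (G.toBlocks₁₁).det ≠ 0 := by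
    rw [← hA, ← gramDet_eq]
    exact (gramDet_pos (hu.1.comp _ Sum.inl_injective)).ne'
  have hE : gramDet (u ∘ Sum.inl) = gramDet (d ∘ Sum.inr) * gramDet u := by
    rw [gramDet_eq (u ∘ Sum.inl), gramDet_eq (d ∘ Sum.inr), gramDet_eq u, hA, hD, ← hGdef]
    exact det_toBlocks_inv G hGdet hAdet
  have hposd : 0 ≤ gramDet (d ∘ Sum.inr) :=
    (gramDet_pos (hd_li.comp _ Sum.inr_injective)).le
  calc latDet v = latDet (u ∘ Sum.inl) := hvdt.symm
    _ = Real.sqrt (gramDet (d ∘ Sum.inr) * gramDet u) := by unfold latDet; rw [hE]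
    _ = Real.sqrt (gramDet (d ∘ Sum.inr)) * Real.sqrt (gramDet u) := Real.sqrt_mul hposd _
    _ = latDet (d ∘ Sum.inr) * latDet u := rfl
    _ = latDet w * detOf n Λ := by rw [hwdt, hτ]


end
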